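/- For all α > 0, θ > 0 and β > 0, the extended xgamma density integrates to one: ∫₀^∞ (θ^(α+1)/((θ+β)·Γ(α+2))) · (α² + α + θ·β·x²) · exp(−θ·x) · x^(α−1) dx = 1. -/

import Mathlib

open MeasureTheory Real

/-- The extended xgamma density integrates to one. -/
theorem exg_density_integrates_to_one (α θ β : ℝ) (hα : 0 < α) (hθ : 0 < θ) (hβ : 0 < β) :
    ∫ x in Set.Ioi (0 : ℝ),
      (θ ^ (α + 1) / ((θ + β) * Real.Gamma (α + 2))) * (α ^ 2 + α + θ * β * x ^ 2) *
        Real.exp (-θ * x) * x ^ (α - 1) = 1 := by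
  set C : ℝ := θ ^ (α + 1) / ((θ + β) * Real.Gamma (α + 2)) with hC
  have hint1 : MeasureTheory.IntegrableOn
      (fun x : ℝ => x ^ (α - 1) * Real.exp (-(θ * x))) (Set.Ioi 0) := by
    have := integrableOn_rpow_mul_exp_neg_mul_rpow (s := α - 1) (p := 1) (b := θ)
      (by linarith) one_pos hθ
    refine this.congr_fun (fun x hx => ?_) measurableSet_Ioi
    dsimp only
    rw [Real.rpow_one, neg_mul]
  have hint2 : MeasureTheory.IntegrableOn
      (fun x : ℝ => x ^ (α + 1) * Real.exp (-(θ * x))) (Set.Ioi 0) := by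
    have := integrableOn_rpow_mul_exp_neg_mul_rpow (s := α + 1) (p := 1) (b := θ)
      (by linarith) one_pos hθ
    refine this.congr_fun (fun x hx => ?_) measurableSet_Ioi
    dsimp only
    rw [Real.rpow_one, neg_mul]
  have hI1 : ∫ x in Set.Ioi (0:ℝ), x ^ (α - 1) * Real.exp (-(θ * x))
      = (1 / θ) ^ α * Real.Gamma α := Real.integral_rpow_mul_exp_neg_mul_Ioi hα hθ
  have hI2 : ∫ x in Set.Ioi (0:ℝ), x ^ (α + 1) * Real.exp (-(θ * x))
      = (1 / θ) ^ (α + 2) * Real.Gamma (α + 2) := by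
    have := Real.integral_rpow_mul_exp_neg_mul_Ioi (a := α + 2) (by linarith) hθ
    simpa [show α + 2 - 1 = α + 1 by ring] using this
  have hsplit : ∫ x in Set.Ioi (0 : ℝ),
      C * (α ^ 2 + α + θ * β * x ^ 2) * Real.exp (-θ * x) * x ^ (α - 1)
      = C * (α ^ 2 + α) * ((1 / θ) ^ α * Real.Gamma α)
        + C * (θ * β) * ((1 / θ) ^ (α + 2) * Real.Gamma (α + 2)) := by
    rw [← hI1, ← hI2, ← MeasureTheory.integral_const_mul, ← MeasureTheory.integral_const_mul,
      ← MeasureTheory.integral_add ((hint1.const_mul _)) ((hint2.const_mul _))]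
    refine MeasureTheory.setIntegral_congr_fun measurableSet_Ioi (fun x hx => ?_)
    have hx0 : (0:ℝ) < x := hx
    have hx2 : x ^ (α - 1) * x ^ (2:ℕ) = x ^ (α + 1) := by
      rw [← Real.rpow_natCast x 2, ← Real.rpow_add hx0]
      congr 1
      push_cast
      ring
    have : C * (α ^ 2 + α + θ * β * x ^ 2) * Real.exp (-θ * x) * x ^ (α - 1)
        = C * (α ^ 2 + α) * (x ^ (α - 1) * Real.exp (-(θ * x)))
          + C * (θ * β) * ((x ^ (α - 1) * x ^ (2:ℕ)) * Real.exp (-(θ * x))) := by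
      rw [neg_mul]; ring
    rw [this, hx2]
  rw [hsplit]
  have hΓα : 0 < Real.Gamma α := Real.Gamma_pos_of_pos hα
  have hΓ2 : Real.Gamma (α + 2) = (α ^ 2 + α) * Real.Gamma α := by
    have h1 : Real.Gamma (α + 2) = (α + 1) * Real.Gamma (α + 1) := by
      rw [show α + 2 = (α + 1) + 1 by ring, Real.Gamma_add_one (by linarith)]
    rw [h1, Real.Gamma_add_one hα.ne']
    ring
  have hθα : θ ^ (α + 1) * (1 / θ) ^ α = θ := by
    rw [one_div, ← Real.rpow_neg_one θ, ← Real.rpow_mul hθ.le, ← Real.rpow_add hθ]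
    rw [show α + 1 + -1 * α = 1 by ring, Real.rpow_one]
  have hθα2 : θ ^ (α + 1) * (1 / θ) ^ (α + 2) = 1 / θ := by
    rw [one_div, ← Real.rpow_neg_one θ, ← Real.rpow_mul hθ.le, ← Real.rpow_add hθ]
    rw [show α + 1 + -1 * (α + 2) = -1 by ring, Real.rpow_neg_one]
  have hΓ2pos : 0 < Real.Gamma (α + 2) := Real.Gamma_pos_of_pos (by linarith)
  have hθβ : θ + β ≠ 0 := by positivity
  have hαα : α ^ 2 + α ≠ 0 := by nlinarith
  rw [hC, hΓ2]
  field_simp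
  linear_combination hθα
    + (θ * β) * hθα2
    + β * (mul_inv_cancel₀ hθ.ne')
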